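/- Let Ω = [a,b], f : Ω×Ω → ℝ continuous and bounded, and K_ℓ the normalized Gaussian kernel with length scale ℓ. Then ∫_Ω |∫_{ℝ∖Ω} f(x,x) K_ℓ(x,y) dy| dx ≤ (13/5) ℓ ‖f‖_∞. In particular this boundary-leakage term tends to 0 as ℓ → 0. -/

import Mathlib

open MeasureTheory

open Set Real in
section
-- exp(-t²/(2ℓ²)) ≤ e^{1/2} e^{-t/ℓ} for t ≥ 0
lemma BL.exp_sq_le (ℓ t : ℝ) (hℓ : 0 < ℓ) :
    Real.exp (-t ^ 2 / (2 * ℓ ^ 2)) ≤ Real.exp (1/2) * Real.exp (-(t / ℓ)) := by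
  rw [← Real.exp_add, Real.exp_le_exp]
  have h2 : (0:ℝ) < 2 * ℓ ^ 2 := by positivity
  rw [div_le_iff₀ h2]
  have ht' : t / ℓ * ℓ = t := div_mul_cancel₀ t hℓ.ne'
  nlinarith [sq_nonneg (t - ℓ)]

lemma BL.tail_exp (c t : ℝ) (hc : 0 < c) :
    ∫ y in Set.Ioi t, Real.exp (-(c * y)) = c⁻¹ * Real.exp (-(c * t)) := by
  have := MeasureTheory.integral_comp_mul_left_Ioi (fun u => Real.exp (-u)) t hc
  simpa [integral_exp_neg_Ioi, smul_eq_mul, integral_exp_Iic] using this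

lemma BL.shift_eq (ℓ x : ℝ) (hℓ : 0 < ℓ) (y : ℝ) :
    Real.exp (-((y - x) / ℓ)) = Real.exp (x / ℓ) * Real.exp (-(ℓ⁻¹ * y)) := by
  rw [← Real.exp_add]
  congr 1
  field_simp
  ring

lemma BL.tail_shift_integral (ℓ x t : ℝ) (hℓ : 0 < ℓ) :
    ∫ y in Set.Ioi t, Real.exp (-((y - x) / ℓ)) = ℓ * Real.exp (-((t - x) / ℓ)) := by
  simp_rw [BL.shift_eq ℓ x hℓ]
  rw [MeasureTheory.integral_const_mul, BL.tail_exp _ _ (inv_pos.mpr hℓ), inv_inv]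
  ring

lemma BL.tail_shift_integrable (ℓ x t : ℝ) (hℓ : 0 < ℓ) :
    IntegrableOn (fun y => Real.exp (-((y - x) / ℓ))) (Set.Ioi t) := by
  simp_rw [BL.shift_eq ℓ x hℓ]
  have h := (exp_neg_integrableOn_Ioi t (inv_pos.mpr hℓ)).const_mul (Real.exp (x / ℓ))
  exact h.congr (Filter.Eventually.of_forall fun y => by simp [neg_mul])

lemma BL.gauss_integrable (ℓ x : ℝ) (hℓ : 0 < ℓ) :
    MeasureTheory.Integrable (fun y => Real.exp (-(x - y) ^ 2 / (2 * ℓ ^ 2))) := by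
  have hb : (0:ℝ) < (2 * ℓ ^ 2)⁻¹ := by positivity
  have h := (integrable_exp_neg_mul_sq hb).comp_sub_right x
  have he : (fun y : ℝ => Real.exp (-(x - y) ^ 2 / (2 * ℓ ^ 2)))
      = fun y : ℝ => Real.exp (-((2 * ℓ ^ 2)⁻¹ * (y - x) ^ 2)) := by
    funext y
    congr 1
    rw [neg_div, div_eq_inv_mul]
    congr 1
    ring
  rw [he]
  exact h.congr (Filter.Eventually.of_forall fun y => by simp [neg_mul])

lemma BL.gauss_tail (ℓ x t : ℝ) (hℓ : 0 < ℓ) (hxt : x ≤ t) :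
    ∫ y in Set.Ioi t, Real.exp (-(x - y) ^ 2 / (2 * ℓ ^ 2))
      ≤ Real.exp (1/2) * ℓ * Real.exp (-((t - x) / ℓ)) := by
  have hmaj : ∀ y ∈ Set.Ioi t, Real.exp (-(x - y) ^ 2 / (2 * ℓ ^ 2))
      ≤ Real.exp (1/2) * Real.exp (-((y - x) / ℓ)) := by
    intro y hy
    have h0 : 0 ≤ y - x := by simp at hy; linarith
    have := BL.exp_sq_le ℓ (y - x) hℓ
    calc Real.exp (-(x - y) ^ 2 / (2 * ℓ ^ 2))
        = Real.exp (-(y - x) ^ 2 / (2 * ℓ ^ 2)) := by congr 2; ring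
      _ ≤ Real.exp (1/2) * Real.exp (-((y - x) / ℓ)) := this
  have hint1 : IntegrableOn (fun y => Real.exp (-(x - y) ^ 2 / (2 * ℓ ^ 2))) (Set.Ioi t) :=
    (BL.gauss_integrable ℓ x hℓ).integrableOn
  have hint2 : IntegrableOn
      (fun y => Real.exp (1/2) * Real.exp (-((y - x) / ℓ))) (Set.Ioi t) :=
    (BL.tail_shift_integrable ℓ x t hℓ).const_mul _
  calc ∫ y in Set.Ioi t, Real.exp (-(x - y) ^ 2 / (2 * ℓ ^ 2))
      ≤ ∫ y in Set.Ioi t, Real.exp (1/2) * Real.exp (-((y - x) / ℓ)) :=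
        MeasureTheory.setIntegral_mono_on hint1 hint2 measurableSet_Ioi hmaj
    _ = Real.exp (1/2) * (ℓ * Real.exp (-((t - x) / ℓ))) := by
        rw [MeasureTheory.integral_const_mul, BL.tail_shift_integral ℓ x t hℓ]
    _ = Real.exp (1/2) * ℓ * Real.exp (-((t - x) / ℓ)) := by ring

lemma BL.gauss_tail_Iio (ℓ x t : ℝ) (hℓ : 0 < ℓ) (hxt : t ≤ x) :
    ∫ y in Set.Iio t, Real.exp (-(x - y) ^ 2 / (2 * ℓ ^ 2))
      ≤ Real.exp (1/2) * ℓ * Real.exp (-((x - t) / ℓ)) := by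
  rw [← MeasureTheory.integral_Iic_eq_integral_Iio]
  have hrw : (fun y => Real.exp (-(x - y) ^ 2 / (2 * ℓ ^ 2)))
      = fun y : ℝ => (fun u : ℝ => Real.exp (-(-x - u) ^ 2 / (2 * ℓ ^ 2))) (-y) := by
    funext y; simp only; congr 2; ring
  calc (∫ y in Set.Iic t, Real.exp (-(x - y) ^ 2 / (2 * ℓ ^ 2)))
      = ∫ u in Set.Ioi (-t), Real.exp (-(-x - u) ^ 2 / (2 * ℓ ^ 2)) := by
        rw [hrw]
        exact integral_comp_neg_Iic t (fun u : ℝ => Real.exp (-(-x - u) ^ 2 / (2 * ℓ ^ 2)))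
    _ ≤ Real.exp (1/2) * ℓ * Real.exp (-((-t - -x) / ℓ)) :=
        BL.gauss_tail ℓ (-x) (-t) hℓ (by linarith)
    _ = Real.exp (1/2) * ℓ * Real.exp (-((x - t) / ℓ)) := by ring_nf

lemma BL.compl_Icc (a b : ℝ) : (Set.Icc a b)ᶜ = Set.Iio a ∪ Set.Ioi b := by
  ext y
  simp only [Set.mem_compl_iff, Set.mem_Icc, not_and_or, not_le, Set.mem_union,
    Set.mem_Iio, Set.mem_Ioi]

lemma BL.numeric : Real.exp (1/2) ≤ (13/10) * Real.sqrt (2 * Real.pi) := by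
  have hπ := Real.pi_gt_d6
  have he := Real.exp_one_lt_d9
  have hrw : Real.sqrt ((169/100) * (2 * Real.pi)) = (13/10:ℝ) * Real.sqrt (2 * Real.pi) := by
    rw [show (169/100:ℝ) = (13/10)^2 by norm_num]
    rw [Real.sqrt_mul (by positivity : (0:ℝ) ≤ (13/10)^2), Real.sqrt_sq (by norm_num)]
  rw [← hrw]
  rw [show (1/2:ℝ) = 1/2 from rfl]
  have h1 : Real.exp (1/2) ^ 2 = Real.exp 1 := by
    rw [sq, ← Real.exp_add]; norm_num
  have h2 : Real.exp (1/2) ≤ Real.sqrt ((169/100) * (2 * Real.pi)) := by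
    rw [show Real.exp (1/2) = Real.sqrt (Real.exp 1) by
      rw [← h1, Real.sqrt_sq (Real.exp_pos _).le]]
    apply Real.sqrt_le_sqrt
    nlinarith
  exact h2

lemma BL.int_Icc_left (ℓ a b : ℝ) (hℓ : 0 < ℓ) (hab : a ≤ b) :
    ∫ x in Set.Icc a b, Real.exp (-((x - a) / ℓ)) ≤ ℓ := by
  rw [MeasureTheory.integral_Icc_eq_integral_Ioc, ← intervalIntegral.integral_of_le hab]
  have hderiv : ∀ x ∈ Set.uIcc a b,
      HasDerivAt (fun x => -(ℓ * Real.exp (-((x - a) / ℓ))))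
        (Real.exp (-((x - a) / ℓ))) x := by
    intro x _
    have h1 : HasDerivAt (fun x : ℝ => -((x - a) / ℓ)) (-(1 / ℓ)) x := by
      simpa using (((hasDerivAt_id x).sub_const a).div_const ℓ).fun_neg
    have h2 := h1.exp
    have h3 := h2.const_mul (-ℓ)
    exact (h3.congr_deriv (by field_simp)).congr_of_eventuallyEq
      (Filter.Eventually.of_forall fun u => by ring)
  have hc : Continuous fun x : ℝ => Real.exp (-((x - a) / ℓ)) := by fun_prop
  have hcont := hc.intervalIntegrable (μ := volume) a b
  rw [intervalIntegral.integral_eq_sub_of_hasDerivAt hderiv hcont]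
  have := Real.exp_pos (-((b - a) / ℓ))
  simp only [sub_self, zero_div, neg_zero, Real.exp_zero]
  nlinarith

lemma BL.int_Icc_right (ℓ a b : ℝ) (hℓ : 0 < ℓ) (hab : a ≤ b) :
    ∫ x in Set.Icc a b, Real.exp (-((b - x) / ℓ)) ≤ ℓ := by
  rw [MeasureTheory.integral_Icc_eq_integral_Ioc, ← intervalIntegral.integral_of_le hab]
  have hderiv : ∀ x ∈ Set.uIcc a b,
      HasDerivAt (fun x => ℓ * Real.exp (-((b - x) / ℓ)))
        (Real.exp (-((b - x) / ℓ))) x := by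
    intro x _
    have h1 : HasDerivAt (fun x : ℝ => -((b - x) / ℓ)) (1 / ℓ) x := by
      have := (((hasDerivAt_id x).const_sub b).div_const ℓ).fun_neg
      exact this.congr_deriv (by field_simp)
    have h2 := h1.exp
    have h3 := h2.const_mul ℓ
    exact h3.congr_deriv (by field_simp)
  have hc : Continuous fun x : ℝ => Real.exp (-((b - x) / ℓ)) := by fun_prop
  have hcont := hc.intervalIntegrable (μ := volume) a b
  rw [intervalIntegral.integral_eq_sub_of_hasDerivAt hderiv hcont]
  have := Real.exp_pos (-((b - a) / ℓ))
  simp only [sub_self, zero_div, neg_zero, Real.exp_zero]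
  nlinarith

end

/-- Boundary-leakage bound: for `Ω = [a,b]` and the normalized Gaussian kernel
`K_ℓ`, `∫_Ω |∫_{ℝ∖Ω} f(x,x) K_ℓ(x,y) dy| dx ≤ (13/5) ℓ ‖f‖_∞`. -/
theorem boundary_leakage_le
    (a b : ℝ) (hab : a < b) (f : ℝ → ℝ → ℝ)
    (hf : ContinuousOn (fun p : ℝ × ℝ => f p.1 p.2) (Set.Icc a b ×ˢ Set.Icc a b))
    (M : ℝ) (hMf : ∀ x ∈ Set.Icc a b, ∀ y ∈ Set.Icc a b, |f x y| ≤ M)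
    (ℓ : ℝ) (hℓ : 0 < ℓ) :
    (∫ x in Set.Icc a b,
        |∫ y in (Set.Icc a b)ᶜ, f x x * ((1 / (ℓ * Real.sqrt (2 * Real.pi))) *
          Real.exp (-(x - y) ^ 2 / (2 * ℓ ^ 2)))|)
      ≤ (13 / 5) * ℓ * M := by
  have hM : 0 ≤ M := le_trans (abs_nonneg _)
    (hMf a ⟨le_refl a, hab.le⟩ a ⟨le_refl a, hab.le⟩)
  have hs : 0 < Real.sqrt (2 * Real.pi) := by positivity
  set c0 : ℝ := 1 / (ℓ * Real.sqrt (2 * Real.pi)) with hc0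
  have hc0pos : 0 < c0 := by rw [hc0]; positivity
  set D : ℝ := M * Real.exp (1/2) / Real.sqrt (2 * Real.pi) with hD
  have hDpos : 0 ≤ D := by rw [hD]; positivity
  have key : ∀ x ∈ Set.Icc a b,
      |∫ y in (Set.Icc a b)ᶜ, f x x * (c0 * Real.exp (-(x - y) ^ 2 / (2 * ℓ ^ 2)))|
        ≤ D * (Real.exp (-((x - a) / ℓ)) + Real.exp (-((b - x) / ℓ))) := by
    intro x hx
    have hint : MeasureTheory.Integrable (fun y => Real.exp (-(x - y) ^ 2 / (2 * ℓ ^ 2))) :=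
      BL.gauss_integrable ℓ x hℓ
    have hre : (fun y => f x x * (c0 * Real.exp (-(x - y) ^ 2 / (2 * ℓ ^ 2))))
        = fun y => (f x x * c0) * Real.exp (-(x - y) ^ 2 / (2 * ℓ ^ 2)) := by
      funext y; ring
    rw [hre, MeasureTheory.integral_const_mul]
    set I := ∫ y in (Set.Icc a b)ᶜ, Real.exp (-(x - y) ^ 2 / (2 * ℓ ^ 2)) with hI
    have hdisj : Disjoint (Set.Iio a) (Set.Ioi b) := by
      rw [Set.disjoint_left]; intro y hy hy'
      simp only [Set.mem_Iio, Set.mem_Ioi] at hy hy'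
      linarith
    have hsplit : I = (∫ y in Set.Iio a, Real.exp (-(x - y) ^ 2 / (2 * ℓ ^ 2)))
        + ∫ y in Set.Ioi b, Real.exp (-(x - y) ^ 2 / (2 * ℓ ^ 2)) := by
      rw [hI, BL.compl_Icc,
        MeasureTheory.setIntegral_union hdisj measurableSet_Ioi
          hint.integrableOn hint.integrableOn]
    have hI0 : 0 ≤ I := MeasureTheory.setIntegral_nonneg measurableSet_Icc.compl
      (fun y _ => (Real.exp_pos _).le)
    have h1 := BL.gauss_tail_Iio ℓ x a hℓ hx.1
    have h2 := BL.gauss_tail ℓ x b hℓ hx.2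
    have hIle : I ≤ Real.exp (1/2) * ℓ *
        (Real.exp (-((x - a) / ℓ)) + Real.exp (-((b - x) / ℓ))) := by
      rw [hsplit]; nlinarith [h1, h2]
    have habs : |f x x * c0 * I| ≤ M * c0 * I := by
      rw [abs_mul, abs_mul, abs_of_nonneg hc0pos.le, abs_of_nonneg hI0]
      have hfx := hMf x hx x hx
      nlinarith [mul_nonneg (mul_nonneg (sub_nonneg.mpr hfx) hc0pos.le) hI0]
    calc |f x x * c0 * I| ≤ M * c0 * I := habs
      _ ≤ M * c0 * (Real.exp (1/2) * ℓ *
            (Real.exp (-((x - a) / ℓ)) + Real.exp (-((b - x) / ℓ)))) :=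
          mul_le_mul_of_nonneg_left hIle (by positivity)
      _ = D * (Real.exp (-((x - a) / ℓ)) + Real.exp (-((b - x) / ℓ))) := by
          rw [hD, hc0]
          field_simp
  have hcontE : Continuous fun x : ℝ =>
      D * (Real.exp (-((x - a) / ℓ)) + Real.exp (-((b - x) / ℓ))) := by fun_prop
  have hintE : MeasureTheory.IntegrableOn
      (fun x : ℝ => D * (Real.exp (-((x - a) / ℓ)) + Real.exp (-((b - x) / ℓ))))
      (Set.Icc a b) := hcontE.integrableOn_Icc
  have step : (∫ x in Set.Icc a b,
      |∫ y in (Set.Icc a b)ᶜ, f x x * (c0 * Real.exp (-(x - y) ^ 2 / (2 * ℓ ^ 2)))|)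
      ≤ ∫ x in Set.Icc a b,
        D * (Real.exp (-((x - a) / ℓ)) + Real.exp (-((b - x) / ℓ))) := by
    refine MeasureTheory.integral_mono_of_nonneg
      (Filter.Eventually.of_forall fun x => abs_nonneg _) hintE ?_
    filter_upwards [MeasureTheory.ae_restrict_mem measurableSet_Icc] with x hx
      using key x hx
  refine le_trans step ?_
  have hc1 : Continuous fun x : ℝ => Real.exp (-((x - a) / ℓ)) := by fun_prop
  have hc2 : Continuous fun x : ℝ => Real.exp (-((b - x) / ℓ)) := by fun_prop
  have heq : (∫ x in Set.Icc a b,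
      D * (Real.exp (-((x - a) / ℓ)) + Real.exp (-((b - x) / ℓ))))
      = D * ((∫ x in Set.Icc a b, Real.exp (-((x - a) / ℓ)))
        + ∫ x in Set.Icc a b, Real.exp (-((b - x) / ℓ))) := by
    rw [MeasureTheory.integral_const_mul,
      MeasureTheory.integral_add hc1.integrableOn_Icc hc2.integrableOn_Icc]
  rw [heq]
  have hl1 := BL.int_Icc_left ℓ a b hℓ hab.le
  have hl2 := BL.int_Icc_right ℓ a b hℓ hab.le
  calc D * ((∫ x in Set.Icc a b, Real.exp (-((x - a) / ℓ)))
        + ∫ x in Set.Icc a b, Real.exp (-((b - x) / ℓ)))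
      ≤ D * (ℓ + ℓ) := mul_le_mul_of_nonneg_left (by linarith) hDpos
    _ ≤ (13 / 5) * ℓ * M := by
      rw [hD, div_mul_eq_mul_div, div_le_iff₀ hs]
      nlinarith [BL.numeric, mul_nonneg hℓ.le hM]
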